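/- If the n×n interval matrix 𝐀 = [A_c − Δ, A_c + Δ] is strongly singular, then the interval matrix [−Δ, Δ] is also strongly singular; in particular, the radius matrix Δ is singular. -/

import Mathlib

/-- If `[Ac - Δ, Ac + Δ]` is strongly singular, then `[-Δ, Δ]` is strongly singular;
in particular `Δ` is singular. -/
theorem strongly_singular_radius {n : ℕ} (Ac Δ : Matrix (Fin n) (Fin n) ℝ)
    (hΔ : ∀ i j, 0 ≤ Δ i j)
    (h : ∀ A : Matrix (Fin n) (Fin n) ℝ,
        (∀ i j, Ac i j - Δ i j ≤ A i j ∧ A i j ≤ Ac i j + Δ i j) → A.det = 0) :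
    (∀ A : Matrix (Fin n) (Fin n) ℝ,
        (∀ i j, -(Δ i j) ≤ A i j ∧ A i j ≤ Δ i j) → A.det = 0) ∧ Δ.det = 0 := by
  have key : ∀ A : Matrix (Fin n) (Fin n) ℝ,
      (∀ i j, -(Δ i j) ≤ A i j ∧ A i j ≤ Δ i j) → A.det = 0 := by
    intro A hA
    have main : ∀ S : Finset (Fin n), ∀ ε : Fin n → ℝ,
        (∀ j, ε j = 1 ∨ ε j = -1) →
        (Matrix.det (Matrix.of fun i j =>
          if i ∈ S then A i j else Ac i j + ε i * A i j)) = 0 := by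
      intro S
      induction S using Finset.induction_on with
      | empty =>
        intro ε hε
        simp only [Finset.notMem_empty, if_false]
        apply h
        intro i j
        have h1 := (hA i j).1
        have h2 := (hA i j).2
        rcases hε i with he | he <;> simp only [Matrix.of_apply, he] <;>
          constructor <;> nlinarith
      | @insert a S ha ih =>
        intro ε hε
        have hB : (Matrix.of fun i j =>
            if i ∈ insert a S then A i j else Ac i j + ε i * A i j) =
            Matrix.updateRow (Matrix.of fun i j =>
              if i ∈ S then A i j else Ac i j + ε i * A i j) a (A a) := by
          ext i j
          by_cases hi : i = a
          · subst hi; simp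
          · simp [Matrix.updateRow_ne hi, Finset.mem_insert, hi]
        have hu : ∀ (s : ℝ), (s = 1 ∨ s = -1) →
            Matrix.updateRow (Matrix.of fun i j =>
              if i ∈ S then A i j else Ac i j + ε i * A i j) a
              (fun j => Ac a j + s * A a j) =
            Matrix.of (fun i j => if i ∈ S then A i j
              else Ac i j + (Function.update ε a s) i * A i j) := by
          intro s _
          ext i j
          by_cases hi : i = a
          · subst hi; simp [ha]
          · simp [Matrix.updateRow_ne hi, Function.update_of_ne hi]
        have hrow : A a = (2⁻¹ : ℝ) • (fun j => Ac a j + 1 * A a j)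
            + (-(2⁻¹) : ℝ) • (fun j => Ac a j + (-1) * A a j) := by
          funext j; simp; ring
        rw [hB, hrow, Matrix.det_updateRow_add, Matrix.det_updateRow_smul,
          Matrix.det_updateRow_smul, hu 1 (Or.inl rfl), hu (-1) (Or.inr rfl)]
        rw [ih _ (fun j => by
            by_cases hj : j = a
            · subst hj; simp
            · simp [Function.update_of_ne hj]; exact hε j),
          ih _ (fun j => by
            by_cases hj : j = a
            · subst hj; simp
            · simp [Function.update_of_ne hj]; exact hε j)]
        ring
    have := main Finset.univ (fun _ => 1) (fun _ => Or.inl rfl)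
    simp at this; exact this
  refine ⟨key, key Δ ?_⟩
  intro i j
  exact ⟨by linarith [hΔ i j], le_refl _⟩
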